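/- Let T be the linear operator with dom(T) = dom(D₀) and Tu = D₀(𝓜u) + 𝓝u. Assume there is c > 0 with Re⟨Tu, u⟩ ≥ c‖u‖² for all u ∈ dom(D₀). Then dom(D₀) ⊆ dom(T*), for every φ ∈ dom(D₀) one has T*φ = −𝓜*(D₀φ) + 2ν𝓜*φ + 𝓝*φ, and Re⟨T*φ, φ⟩ = Re⟨Tφ, φ⟩ ≥ c‖φ‖² for all φ ∈ dom(D₀). -/

import Mathlib

open Filter

/-- The operator `T` with domain `dom D₀`, `T u = D₀(𝓜 u) + 𝓝 u`. -/
noncomputable def T0 {K : Type*} [NormedAddCommGroup K] [InnerProductSpace ℂ K]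
    (D₀ : K →ₗ.[ℂ] K) (Mc N : K →L[ℂ] K)
    (hM : ∀ u ∈ D₀.domain, Mc u ∈ D₀.domain) : K →ₗ.[ℂ] K where
  domain := D₀.domain
  toFun :=
    D₀.toFun.comp (LinearMap.codRestrict D₀.domain
        ((Mc : K →ₗ[ℂ] K).comp D₀.domain.subtype) (fun u => hM _ u.2))
    + (N : K →ₗ[ℂ] K).comp D₀.domain.subtype

theorem stmt8
    {K : Type*} [NormedAddCommGroup K] [InnerProductSpace ℂ K] [CompleteSpace K]
    (ν : ℝ) (hν : 0 < ν)
    (D₀ : K →ₗ.[ℂ] K) (hD₀dense : Dense (D₀.domain : Set K)) (hD₀closed : D₀.IsClosed)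
    -- the adjoint of `D₀` is `2ν - D₀`
    (hadjdom : D₀.adjoint.domain = D₀.domain)
    (hadjval : ∀ (u : K) (hu : u ∈ D₀.domain) (hu' : u ∈ D₀.adjoint.domain),
      D₀.adjoint ⟨u, hu'⟩ = ((2 * ν : ℝ) : ℂ) • u - D₀ ⟨u, hu⟩)
    (Mc N Mop : K →L[ℂ] K)
    (hMdom : ∀ u ∈ D₀.domain, Mc u ∈ D₀.domain)
    (hMcomm : ∀ u : D₀.domain, Mc (D₀ u) = D₀ ⟨Mc u, hMdom u u.2⟩ + Mop u)
    (c : ℝ) (hc : 0 < c)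
    (hpos : ∀ (u : K) (hu : u ∈ D₀.domain),
      c * ‖u‖ ^ 2 ≤ (inner ℂ (T0 D₀ Mc N hMdom ⟨u, hu⟩) u : ℂ).re) :
    (∀ φ ∈ D₀.domain, φ ∈ (T0 D₀ Mc N hMdom).adjoint.domain) ∧
    (∀ (φ : K) (hφ : φ ∈ D₀.domain) (hφ' : φ ∈ (T0 D₀ Mc N hMdom).adjoint.domain),
      (T0 D₀ Mc N hMdom).adjoint ⟨φ, hφ'⟩
        = -(ContinuousLinearMap.adjoint Mc (D₀ ⟨φ, hφ⟩))
          + ((2 * ν : ℝ) : ℂ) • ContinuousLinearMap.adjoint Mc φ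
          + ContinuousLinearMap.adjoint N φ) ∧
    (∀ (φ : K) (hφ : φ ∈ D₀.domain) (hφ' : φ ∈ (T0 D₀ Mc N hMdom).adjoint.domain),
      (inner ℂ ((T0 D₀ Mc N hMdom).adjoint ⟨φ, hφ'⟩) φ : ℂ).re
        = (inner ℂ (T0 D₀ Mc N hMdom ⟨φ, hφ⟩) φ : ℂ).re ∧
      c * ‖φ‖ ^ 2 ≤ (inner ℂ (T0 D₀ Mc N hMdom ⟨φ, hφ⟩) φ : ℂ).re) := by
    classical
  set T := T0 D₀ Mc N hMdom with hT
  have hTdom : T.domain = D₀.domain := rfl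
  have hTdense : Dense (T.domain : Set K) := hD₀dense
  have hTapp : ∀ (u : K) (hu : u ∈ D₀.domain),
      T ⟨u, hu⟩ = D₀ ⟨Mc u, hMdom u hu⟩ + N u := fun u hu => rfl
  -- the candidate adjoint value
  have key : ∀ (φ : K) (hφ : φ ∈ D₀.domain) (u : T.domain),
      (inner ℂ (-(ContinuousLinearMap.adjoint Mc (D₀ ⟨φ, hφ⟩))
          + ((2 * ν : ℝ) : ℂ) • ContinuousLinearMap.adjoint Mc φ
          + ContinuousLinearMap.adjoint N φ) (u : K) : ℂ) = inner ℂ φ (T u) := by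
    intro φ hφ u
    have hu : (u : K) ∈ D₀.domain := u.2
    have hφ' : φ ∈ D₀.adjoint.domain := hadjdom ▸ hφ
    have hform := D₀.adjoint_isFormalAdjoint hD₀dense ⟨φ, hφ'⟩
      ⟨Mc u, hMdom u hu⟩
    rw [hadjval φ hφ hφ'] at hform
    have : T u = D₀ ⟨Mc u, hMdom u hu⟩ + N u := rfl
    rw [this, inner_add_right, ← hform]
    simp only [inner_add_left, inner_neg_left, inner_smul_left,
      ContinuousLinearMap.adjoint_inner_left, inner_sub_left]
    push_cast
    ring
  have hmem : ∀ φ ∈ D₀.domain, φ ∈ T.adjoint.domain := by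
    intro φ hφ
    exact LinearPMap.mem_adjoint_domain_of_exists _
      ⟨_, key φ hφ⟩
  have hval : ∀ (φ : K) (hφ : φ ∈ D₀.domain) (hφ' : φ ∈ T.adjoint.domain),
      T.adjoint ⟨φ, hφ'⟩
        = -(ContinuousLinearMap.adjoint Mc (D₀ ⟨φ, hφ⟩))
          + ((2 * ν : ℝ) : ℂ) • ContinuousLinearMap.adjoint Mc φ
          + ContinuousLinearMap.adjoint N φ := by
    intro φ hφ hφ'
    exact LinearPMap.adjoint_apply_eq hTdense ⟨φ, hφ'⟩ (key φ hφ)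
  refine ⟨hmem, hval, ?_⟩
  intro φ hφ hφ'
  have hre : (inner ℂ (T.adjoint ⟨φ, hφ'⟩) φ : ℂ).re
      = (inner ℂ (T ⟨φ, hφ⟩) φ : ℂ).re := by
    have := T.adjoint_isFormalAdjoint hTdense ⟨φ, hφ'⟩ ⟨φ, hφ⟩
    rw [this, ← inner_conj_symm]
    exact Complex.conj_re _
  exact ⟨hre, hpos φ hφ⟩
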